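/- Let $A$ be an $m\times m$ matrix over a commutative ring, $m\ge 2$, and let $\ell=m$ denote the last row/column. Then $\det A\cdot \det A_{\hat 1\hat\ell}^{\hat 1\hat\ell} + \det A_{\hat 1}^{\hat\ell}\cdot\det A_{\hat\ell}^{\hat 1} = \det A_{\hat 1}^{\hat 1}\cdot \det A_{\hat\ell}^{\hat\ell}$. -/

import Mathlib

open Matrix Finset

namespace DJAux

variable {R : Type*} [CommRing R]

lemma det_one_updateColumn {k : ℕ} (j : Fin k) (v : Fin k → R) :
    ((1 : Matrix (Fin k) (Fin k) R).updateCol j v).det = v j := by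
  rw [← cramer_apply, cramer_one]
  rfl

lemma updateColumn_comm {k : ℕ} (A : Matrix (Fin k) (Fin k) R) {i j : Fin k} (h : i ≠ j)
    (c d : Fin k → R) :
    (A.updateCol i c).updateCol j d = (A.updateCol j d).updateCol i c := by
  ext r s
  simp only [updateCol_apply]
  split_ifs with h1 h2 <;> try rfl
  exact absurd (h2.symm.trans h1) h

lemma mul_updateColumn {k : ℕ} (A B : Matrix (Fin k) (Fin k) R) (j : Fin k) (c : Fin k → R) :
    A * (B.updateCol j c) = (A * B).updateCol j (A *ᵥ c) := by
  ext i s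
  rcases eq_or_ne s j with rfl | hsj
  · simp [mul_apply, updateCol_apply, mulVec, dotProduct]
  · simp [mul_apply, updateCol_apply, hsj]

lemma detM (m : ℕ) (c₀ c₁ : Fin (m+2) → R) :
    (((1 : Matrix (Fin (m+2)) (Fin (m+2)) R).updateCol 0 c₀).updateCol
        (Fin.last (m+1)) c₁).det
      = c₀ 0 * c₁ (Fin.last (m+1)) - c₀ (Fin.last (m+1)) * c₁ 0 := by
  set l : Fin (m+2) := Fin.last (m+1) with hl
  have h0l : (0 : Fin (m+2)) ≠ l := by simp [hl, Fin.ext_iff]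
  set M : Matrix (Fin (m+2)) (Fin (m+2)) R :=
    ((1 : Matrix (Fin (m+2)) (Fin (m+2)) R).updateCol 0 c₀).updateCol l c₁ with hM
  have hMc0 : ∀ i, M i 0 = c₀ i := by
    intro i; rw [hM, updateCol_ne h0l, updateCol_self]
  have hMcl : ∀ i, M i l = c₁ i := by
    intro i; rw [hM, updateCol_self]
  have hMmid : ∀ i j, j ≠ 0 → j ≠ l → M i j = (1 : Matrix (Fin (m+2)) (Fin (m+2)) R) i j := by
    intro i j hj0 hjl; rw [hM, updateCol_ne hjl, updateCol_ne hj0]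
  rw [det_succ_column_zero]
  rw [← Finset.sum_subset (Finset.subset_univ ({0, l} : Finset (Fin (m+2)))) ?_]
  · rw [Finset.sum_pair h0l]
    have e0 : M.submatrix (0 : Fin (m+2)).succAbove Fin.succ
        = (1 : Matrix (Fin (m+1)) (Fin (m+1)) R).updateCol (Fin.last m)
            (fun r => c₁ r.succ) := by
      ext r j
      rw [Fin.succAbove_zero, submatrix_apply]
      rcases eq_or_ne j (Fin.last m) with rfl | hj
      · rw [Fin.succ_last, hMcl, updateCol_self]
      · have hj0 : j.succ ≠ (0 : Fin (m+2)) := Fin.succ_ne_zero j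
        have hjl : j.succ ≠ l := by
          rw [hl, ← Fin.succ_last]; exact fun h => hj (Fin.succ_injective _ h)
        rw [hMmid _ _ hj0 hjl, updateCol_ne hj]
        simp [one_apply, Fin.succ_inj]
    have el : M.submatrix l.succAbove Fin.succ
        = Matrix.of (fun (r j : Fin (m+1)) => if j = Fin.last m then c₁ r.castSucc
            else if (r : ℕ) = (j : ℕ) + 1 then 1 else 0) := by
      ext r j
      rw [hl, Fin.succAbove_last, submatrix_apply, of_apply]
      rcases eq_or_ne j (Fin.last m) with rfl | hj
      · rw [if_pos rfl, Fin.succ_last, ← hl, hMcl]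
      · have hj0 : j.succ ≠ (0 : Fin (m+2)) := Fin.succ_ne_zero j
        have hjl : j.succ ≠ l := by
          rw [hl, ← Fin.succ_last]; exact fun h => hj (Fin.succ_injective _ h)
        rw [if_neg hj, hMmid _ _ hj0 hjl]
        simp [one_apply, Fin.ext_iff]
    rw [e0, det_one_updateColumn]
    -- second term
    have : det (M.submatrix l.succAbove Fin.succ) = (-1) ^ m * c₁ 0 := by
      rw [el, det_succ_row_zero]
      rw [Fintype.sum_eq_single (Fin.last m) ?_]
      · have hminor : (Matrix.of (fun (r j : Fin (m+1)) => if j = Fin.last m then c₁ r.castSucc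
            else if (r : ℕ) = (j : ℕ) + 1 then 1 else 0) :
              Matrix (Fin (m+1)) (Fin (m+1)) R).submatrix Fin.succ (Fin.last m).succAbove
            = (1 : Matrix (Fin m) (Fin m) R) := by
          ext r j
          rw [Fin.succAbove_last, submatrix_apply, of_apply]
          have : j.castSucc ≠ Fin.last m := (Fin.castSucc_lt_last j).ne
          rw [if_neg this]
          simp [one_apply, Fin.ext_iff]
        rw [hminor, det_one, mul_one, of_apply, if_pos rfl]
        simp [mul_comm]
      · intro j hj
        rw [of_apply, if_neg hj]
        have : ((0 : Fin (m+1)) : ℕ) ≠ (j : ℕ) + 1 := by simp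
        rw [if_neg this, mul_zero, zero_mul]
    rw [this, hMc0 0, hMc0 l, Fin.succ_last, ← hl]
    have h0v : ((0 : Fin (m+2)) : ℕ) = 0 := rfl
    have hlv : ((l : Fin (m+2)) : ℕ) = m + 1 := rfl
    rw [h0v, hlv, pow_zero, one_mul]
    have hs : ((-1 : R)) ^ (m*2) = 1 := by
      rw [mul_comm, pow_mul, neg_one_sq, one_pow]
    linear_combination (-(c₀ l * c₁ 0)) * hs
  · intro i _ hi
    simp only [Finset.mem_insert, Finset.mem_singleton, not_or] at hi
    obtain ⟨hi0, hil⟩ := hi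
    have : det (M.submatrix i.succAbove Fin.succ) = 0 := by
      apply det_eq_zero_of_column_eq_zero (Fin.pred i hi0)
      intro r
      rw [submatrix_apply, Fin.succ_pred]
      rw [hMmid _ _ hi0 hil]
      exact one_apply_ne (Fin.succAbove_ne i r)
    rw [this, mul_zero]

lemma detC (m : ℕ) (A : Matrix (Fin (m+2)) (Fin (m+2)) R) :
    ((A.updateCol 0 (Pi.single 0 1)).updateCol (Fin.last (m+1))
        (Pi.single (Fin.last (m+1)) 1)).det
      = (A.submatrix (fun i : Fin m => i.succ.castSucc) (fun j : Fin m => j.succ.castSucc)).det := by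
  set l : Fin (m+2) := Fin.last (m+1) with hl
  have h0l : (0 : Fin (m+2)) ≠ l := by simp [hl, Fin.ext_iff]
  set C : Matrix (Fin (m+2)) (Fin (m+2)) R :=
    (A.updateCol 0 (Pi.single 0 1)).updateCol l (Pi.single l 1) with hC
  rw [det_succ_column_zero, Fintype.sum_eq_single 0 ?_]
  · have hC00 : C 0 0 = 1 := by
      rw [hC, updateCol_ne h0l, updateCol_self, Pi.single_eq_same]
    rw [hC00, Fin.val_zero, pow_zero, one_mul, one_mul, Fin.succAbove_zero]
    have hD : C.submatrix Fin.succ Fin.succ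
        = (A.submatrix Fin.succ Fin.succ).updateCol (Fin.last m)
            (Pi.single (Fin.last m) 1) := by
      ext r j
      rw [submatrix_apply]
      rcases eq_or_ne j (Fin.last m) with rfl | hj
      · rw [Fin.succ_last, hC, updateCol_self, updateCol_self]
        rcases eq_or_ne r (Fin.last m) with rfl | hr
        · rw [Fin.succ_last, ← hl, Pi.single_eq_same, Pi.single_eq_same]
        · have : r.succ ≠ l := by
            rw [hl, ← Fin.succ_last]; exact fun h => hr (Fin.succ_injective _ h)
          rw [Pi.single_eq_of_ne this, Pi.single_eq_of_ne hr]
      · have hj0 : j.succ ≠ (0 : Fin (m+2)) := Fin.succ_ne_zero j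
        have hjl : j.succ ≠ l := by
          rw [hl, ← Fin.succ_last]; exact fun h => hj (Fin.succ_injective _ h)
        rw [hC, updateCol_ne hjl, updateCol_ne hj0, updateCol_ne hj, submatrix_apply]
    rw [hD, det_succ_column _ (Fin.last m), Fintype.sum_eq_single (Fin.last m) ?_]
    · rw [updateCol_self, Pi.single_eq_same, mul_one]
      have : ((Fin.last m : Fin (m+1)) : ℕ) = m := rfl
      rw [this, ← two_mul, pow_mul, neg_one_sq, one_pow, one_mul, Fin.succAbove_last]
      congr 1
      ext r j
      have : j.castSucc ≠ Fin.last m := (Fin.castSucc_lt_last j).ne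
      rw [submatrix_apply, updateCol_ne this, submatrix_apply, submatrix_apply,
        Fin.succ_castSucc, Fin.succ_castSucc]
    · intro i hi
      rw [updateCol_self, Pi.single_eq_of_ne hi, mul_zero, zero_mul]
  · intro i hi
    have : C i 0 = 0 := by
      rw [hC, updateCol_ne h0l, updateCol_self, Pi.single_eq_of_ne hi]
    rw [this, mul_zero, zero_mul]

lemma key (m : ℕ) (A : Matrix (Fin (m+2)) (Fin (m+2)) R) :
    A.det * ((A.submatrix Fin.succ Fin.succ).det * (A.submatrix Fin.castSucc Fin.castSucc).det
      - (A.submatrix Fin.succ Fin.castSucc).det * (A.submatrix Fin.castSucc Fin.succ).det)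
    = A.det * (A.det *
        (A.submatrix (fun i : Fin m => i.succ.castSucc)
          (fun j : Fin m => j.succ.castSucc)).det) := by
  set l : Fin (m+2) := Fin.last (m+1) with hl
  have h0l : (0 : Fin (m+2)) ≠ l := by simp [hl, Fin.ext_iff]
  let c₀ : Fin (m+2) → R := fun i => adjugate A i 0
  let c₁ : Fin (m+2) → R := fun i => adjugate A i l
  -- adjugate corner entries
  have ha00 : adjugate A 0 0 = (A.submatrix Fin.succ Fin.succ).det := by
    rw [adjugate_fin_succ_eq_det_submatrix]
    simp [Fin.succAbove_zero]
  have hall : adjugate A l l = (A.submatrix Fin.castSucc Fin.castSucc).det := by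
    rw [adjugate_fin_succ_eq_det_submatrix]
    rw [hl, Fin.succAbove_last]
    have : ((Fin.last (m+1) : Fin (m+2)) : ℕ) = m + 1 := rfl
    rw [this, ← two_mul, pow_mul, neg_one_sq, one_pow, one_mul]
  have ha0l : adjugate A 0 l = (-1 : R) ^ (m+1) * (A.submatrix Fin.castSucc Fin.succ).det := by
    rw [adjugate_fin_succ_eq_det_submatrix]
    rw [hl, Fin.succAbove_last, Fin.succAbove_zero]
    norm_num
  have hal0 : adjugate A l 0 = (-1 : R) ^ (m+1) * (A.submatrix Fin.succ Fin.castSucc).det := by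
    rw [adjugate_fin_succ_eq_det_submatrix]
    rw [hl, Fin.succAbove_last, Fin.succAbove_zero]
    norm_num
  have hdetM : (((1 : Matrix (Fin (m+2)) (Fin (m+2)) R).updateCol 0 c₀).updateCol
      l c₁).det
      = (A.submatrix Fin.succ Fin.succ).det * (A.submatrix Fin.castSucc Fin.castSucc).det
        - (A.submatrix Fin.succ Fin.castSucc).det * (A.submatrix Fin.castSucc Fin.succ).det := by
    rw [hl, detM, ← hl]
    show adjugate A 0 0 * adjugate A l l - adjugate A l 0 * adjugate A 0 l = _
    rw [ha00, hall, ha0l, hal0]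
    have hs : ((-1 : R)) ^ (m*2) = 1 := by
      rw [mul_comm, pow_mul, neg_one_sq, one_pow]
    linear_combination (-((A.submatrix Fin.succ Fin.castSucc).det
      * (A.submatrix Fin.castSucc Fin.succ).det)) * hs
  have hmulM : A * (((1 : Matrix (Fin (m+2)) (Fin (m+2)) R).updateCol 0 c₀).updateCol l c₁)
      = ((A.updateCol 0 (A.det • (Pi.single 0 1 : Fin (m+2) → R))).updateCol l
          (A.det • (Pi.single l 1 : Fin (m+2) → R))) := by
    rw [mul_updateColumn, mul_updateColumn, mul_one]
    have hv : ∀ j : Fin (m+2), A *ᵥ (fun i => adjugate A i j) = A.det • (Pi.single j 1 : Fin (m+2) → R) := by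
      intro j
      funext i
      have : (A *ᵥ fun i => adjugate A i j) i = (A * adjugate A) i j := by
        simp [mulVec, dotProduct, mul_apply]
      rw [this, mul_adjugate]
      simp [Matrix.smul_apply, one_apply, Pi.single_apply, eq_comm]
    rw [show c₀ = fun i => adjugate A i 0 from rfl,
      show c₁ = fun i => adjugate A i l from rfl, hv 0, hv l]
  calc A.det * ((A.submatrix Fin.succ Fin.succ).det
        * (A.submatrix Fin.castSucc Fin.castSucc).det
      - (A.submatrix Fin.succ Fin.castSucc).det * (A.submatrix Fin.castSucc Fin.succ).det)
      = A.det * (((1 : Matrix (Fin (m+2)) (Fin (m+2)) R).updateCol 0 c₀).updateCol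
          l c₁).det := by rw [hdetM]
    _ = (A * (((1 : Matrix (Fin (m+2)) (Fin (m+2)) R).updateCol 0 c₀).updateCol
          l c₁)).det := (det_mul _ _).symm
    _ = ((A.updateCol 0 (A.det • (Pi.single 0 1 : Fin (m+2) → R))).updateCol l
          (A.det • (Pi.single l 1 : Fin (m+2) → R))).det := by rw [hmulM]
    _ = A.det * (A.det * ((A.updateCol 0 (Pi.single 0 1)).updateCol l
          (Pi.single l 1)).det) := by
        rw [det_updateCol_smul, updateColumn_comm _ h0l, det_updateCol_smul,
          updateColumn_comm _ h0l.symm]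
    _ = _ := by rw [hl, detC]

lemma key_generic (m : ℕ) :
    ((mvPolynomialX (Fin (m+2)) (Fin (m+2)) ℤ).submatrix Fin.succ Fin.succ).det
      * ((mvPolynomialX (Fin (m+2)) (Fin (m+2)) ℤ).submatrix Fin.castSucc Fin.castSucc).det
    - ((mvPolynomialX (Fin (m+2)) (Fin (m+2)) ℤ).submatrix Fin.succ Fin.castSucc).det
      * ((mvPolynomialX (Fin (m+2)) (Fin (m+2)) ℤ).submatrix Fin.castSucc Fin.succ).det
    = (mvPolynomialX (Fin (m+2)) (Fin (m+2)) ℤ).det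
      * ((mvPolynomialX (Fin (m+2)) (Fin (m+2)) ℤ).submatrix
          (fun i : Fin m => i.succ.castSucc) (fun j : Fin m => j.succ.castSucc)).det :=
  mul_left_cancel₀ (det_mvPolynomialX_ne_zero _ ℤ) (key m _)

end DJAux

/-- The special case `r₁ = c₁ = 1`, `r₂ = c₂ = m` of the Desnanot–Jacobi identity:
`det A · det A_{1̂ℓ̂}^{1̂ℓ̂} + det A_{1̂}^{ℓ̂} · det A_{ℓ̂}^{1̂} = det A_{1̂}^{1̂} · det A_{ℓ̂}^{ℓ̂}`. -/
theorem desnanot_jacobi_corners {R : Type*} [CommRing R] (m : ℕ)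
    (A : Matrix (Fin (m+2)) (Fin (m+2)) R) :
    A.det * (A.submatrix (fun i : Fin m => i.succ.castSucc) (fun j : Fin m => j.succ.castSucc)).det
      + (A.submatrix Fin.succ Fin.castSucc).det * (A.submatrix Fin.castSucc Fin.succ).det
    = (A.submatrix Fin.succ Fin.succ).det * (A.submatrix Fin.castSucc Fin.castSucc).det := by
  open Matrix in
  let f : MvPolynomial (Fin (m+2) × Fin (m+2)) ℤ →+* R :=
    (MvPolynomial.eval₂Hom (Int.castRingHom R) fun p => A p.1 p.2)
  have hmap : (mvPolynomialX (Fin (m+2)) (Fin (m+2)) ℤ).map f = A :=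
    mvPolynomialX_map_eval₂ _ A
  have h := congrArg f (DJAux.key_generic m)
  have hd : ∀ (k : ℕ) (r : Fin k → Fin (m+2)) (c : Fin k → Fin (m+2)),
      f ((mvPolynomialX (Fin (m+2)) (Fin (m+2)) ℤ).submatrix r c).det
        = (A.submatrix r c).det := by
    intro k r c
    rw [RingHom.map_det]
    congr 1
    show ((mvPolynomialX (Fin (m+2)) (Fin (m+2)) ℤ).submatrix r c).map f = A.submatrix r c
    rw [← submatrix_map, hmap]
  rw [map_sub, _root_.map_mul, _root_.map_mul, _root_.map_mul] at h
  rw [hd, hd, hd, hd, hd, RingHom.map_det] at h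
  have hA : ((mvPolynomialX (Fin (m+2)) (Fin (m+2)) ℤ).map f).det = A.det := by rw [hmap]
  rw [show (f.mapMatrix (mvPolynomialX (Fin (m+2)) (Fin (m+2)) ℤ)).det
      = ((mvPolynomialX (Fin (m+2)) (Fin (m+2)) ℤ).map f).det from rfl, hA] at h
  linear_combination -h
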